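/- Let F be a finite field with q elements and n ≥ 2. For every positive integer M ≤ (qⁿ−1)/(q−1) and every set {x₁,…,x_M} of pairwise non-equivalent nonzero vectors in Fⁿ, there exist y₁,…,y_M ∈ Fⁿ such that #(⋃_{i=1}^M L(xᵢ,yᵢ)) ≤ q + qⁿ(1 − (1 − 1/q^{n−1})^{M−1}). -/

import Mathlib

/-- The line through `y` with direction `x` in `Fⁿ`. -/
def kakeyaLine {F : Type*} [Field F] [Fintype F] [DecidableEq F] {n : ℕ}
    (x y : Fin n → F) : Finset (Fin n → F) :=
  Finset.image (fun a : F => y + a • x) Finset.univ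

theorem stmt_15 {F : Type*} [Field F] [Fintype F] [DecidableEq F] {n : ℕ}
    (hn : 2 ≤ n) (q : ℕ) (hq : Fintype.card F = q)
    (M : ℕ) (hM : 0 < M) (hMle : M ≤ (q ^ n - 1) / (q - 1))
    (x : Fin M → (Fin n → F))
    (hx0 : ∀ i, x i ≠ 0)
    (hne : ∀ i j, i ≠ j → ∀ a : F, a ≠ 0 → x i ≠ a • x j) :
    ∃ y : Fin M → (Fin n → F),
      ((Finset.univ.biUnion (fun i => kakeyaLine (x i) (y i))).card : ℝ)
        ≤ q + (q : ℝ) ^ n * (1 - (1 - 1 / (q : ℝ) ^ (n - 1)) ^ (M - 1)) := by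
  classical
  obtain ⟨m, rfl⟩ : ∃ m, M = m + 1 := ⟨M - 1, (Nat.succ_pred_eq_of_pos hM).symm⟩
  simp only [Nat.add_sub_cancel]
  have hq2 : 2 ≤ q := by rw [← hq]; exact Fintype.one_lt_card
  have hq0 : 0 < q := Nat.lt_of_lt_of_le Nat.zero_lt_two hq2
  have hcV : Fintype.card (Fin n → F) = q ^ n := by
    simp [Fintype.card_fun, hq]
  set N := q ^ n with hNdef
  have hN0 : 0 < N := pow_pos hq0 n
  have hqN : q ≤ N := by
    calc q = q ^ 1 := (pow_one q).symm
    _ ≤ q ^ n := Nat.pow_le_pow_right hq0 (by omega)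
  set i0 : Fin (m + 1) := ⟨0, Nat.succ_pos m⟩ with hi0
  set s : Finset (Fin (m + 1)) := Finset.univ.erase i0 with hs
  have hscard : s.card = m := by
    rw [hs, Finset.card_erase_of_mem (Finset.mem_univ _), Finset.card_univ, Fintype.card_fin]
    exact Nat.succ_sub_one m
  set Az : Fin (m + 1) → (Fin n → F) → Finset (Fin n → F) :=
    fun i z => Finset.image (fun a : F => z - a • x i) Finset.univ with hAzdef
  have hAz_mem : ∀ i z (w : Fin n → F), z ∈ kakeyaLine (x i) w ↔ w ∈ Az i z := by
    intro i z w
    simp only [kakeyaLine, hAzdef, Finset.mem_image, Finset.mem_univ, true_and]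
    constructor
    · rintro ⟨a, ha⟩; exact ⟨a, by rw [← ha]; abel⟩
    · rintro ⟨a, ha⟩; exact ⟨a, by rw [← ha]; abel⟩
  have hAz_card : ∀ i z, (Az i z).card = q := by
    intro i z
    rw [hAzdef]
    rw [Finset.card_image_of_injective _ ?_, Finset.card_univ, hq]
    intro a b hab
    have h1 : a • x i = b • x i := sub_right_inj.mp hab
    have h2 : (a - b) • x i = 0 := by rw [sub_smul, h1, sub_self]
    rcases smul_eq_zero.mp h2 with h | h
    · exact sub_eq_zero.mp h
    · exact absurd h (hx0 i)
  -- the count of bad y' for a fixed point z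
  have hcount : ∀ z : Fin n → F,
      (Finset.univ.filter
        (fun y' : Fin (m + 1) → (Fin n → F) => ∀ i ∈ s, z ∉ kakeyaLine (x i) (y' i))).card
        = (N - q) ^ m * N := by
    intro z
    have heq : (Finset.univ.filter
        (fun y' : Fin (m + 1) → (Fin n → F) => ∀ i ∈ s, z ∉ kakeyaLine (x i) (y' i)))
        = Fintype.piFinset (fun i => if i ∈ s then (Az i z)ᶜ else Finset.univ) := by
      ext y'
      simp only [Finset.mem_filter, Finset.mem_univ, true_and, Fintype.mem_piFinset]
      constructor
      · intro h i
        by_cases hi : i ∈ s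
        · simp only [hi, if_true, Finset.mem_compl]
          exact fun hc => h i hi ((hAz_mem i z (y' i)).mpr hc)
        · simp [hi]
      · intro h i hi
        have hh := h i
        rw [if_pos hi, Finset.mem_compl] at hh
        exact fun hc => hh ((hAz_mem i z (y' i)).mp hc)
    rw [heq, Fintype.card_piFinset]
    rw [← Finset.prod_filter_mul_prod_filter_not Finset.univ (· ∈ s)]
    have e1 : ∀ i ∈ Finset.univ.filter (· ∈ s),
        (if i ∈ s then (Az i z)ᶜ else (Finset.univ : Finset (Fin n → F))).card = N - q := by
      intro i hi
      rw [Finset.mem_filter] at hi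
      rw [if_pos hi.2, Finset.card_compl, hAz_card, hcV]
    have e2 : ∀ i ∈ Finset.univ.filter (fun i => ¬ i ∈ s),
        (if i ∈ s then (Az i z)ᶜ else (Finset.univ : Finset (Fin n → F))).card = N := by
      intro i hi
      rw [Finset.mem_filter] at hi
      rw [if_neg hi.2, Finset.card_univ, hcV]
    rw [Finset.prod_congr rfl e1, Finset.prod_congr rfl e2, Finset.prod_const, Finset.prod_const]
    have c1 : (Finset.univ.filter (· ∈ s)).card = m := by
      rw [Finset.filter_mem_eq_inter, Finset.univ_inter, hscard]
    have c2 : (Finset.univ.filter (fun i => ¬ i ∈ s)).card = 1 := by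
      have := Finset.card_filter_add_card_filter_not
        (s := (Finset.univ : Finset (Fin (m + 1)))) (p := (· ∈ s))
      rw [Finset.card_univ, Fintype.card_fin, c1] at this
      exact Nat.add_left_cancel this
    rw [c1, c2, pow_one]
  have hcard_univ_fun : Fintype.card (Fin (m + 1) → (Fin n → F)) = N ^ (m + 1) := by
    rw [Fintype.card_fun, hcV, Fintype.card_fin]
  have hsub : (N - q) ^ m * N ≤ N ^ (m + 1) := by
    calc (N - q) ^ m * N ≤ N ^ m * N :=
          Nat.mul_le_mul_right _ (Nat.pow_le_pow_left (Nat.sub_le _ _) m)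
    _ = N ^ (m + 1) := (pow_succ N m).symm
  -- total sum over all choices of y'
  have hT : ∑ y' : Fin (m + 1) → (Fin n → F),
      (s.biUnion (fun i => kakeyaLine (x i) (y' i))).card
      = N * (N ^ (m + 1) - (N - q) ^ m * N) := by
    have step1 : ∀ y' : Fin (m + 1) → (Fin n → F),
        (s.biUnion (fun i => kakeyaLine (x i) (y' i))).card
        = ∑ z : Fin n → F, if z ∈ s.biUnion (fun i => kakeyaLine (x i) (y' i)) then 1 else 0 := by
      intro y'
      rw [← Finset.card_filter]
      congr 1
      ext z; simp
    calc ∑ y' : Fin (m + 1) → (Fin n → F),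
          (s.biUnion (fun i => kakeyaLine (x i) (y' i))).card
        = ∑ y' : Fin (m + 1) → (Fin n → F), ∑ z : Fin n → F,
            if z ∈ s.biUnion (fun i => kakeyaLine (x i) (y' i)) then 1 else 0 :=
          Finset.sum_congr rfl fun y' _ => step1 y'
      _ = ∑ z : Fin n → F, ∑ y' : Fin (m + 1) → (Fin n → F),
            if z ∈ s.biUnion (fun i => kakeyaLine (x i) (y' i)) then 1 else 0 :=
          Finset.sum_comm
      _ = ∑ z : Fin n → F,
            (Finset.univ.filter (fun y' : Fin (m + 1) → (Fin n → F) =>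
              z ∈ s.biUnion (fun i => kakeyaLine (x i) (y' i)))).card :=
          Finset.sum_congr rfl fun z _ => (Finset.card_filter _ _).symm
      _ = ∑ _z : Fin n → F, (N ^ (m + 1) - (N - q) ^ m * N) := by
          refine Finset.sum_congr rfl fun z _ => ?_
          have hsplit := Finset.card_filter_add_card_filter_not
            (s := (Finset.univ : Finset (Fin (m + 1) → (Fin n → F))))
            (p := fun y' => z ∈ s.biUnion (fun i => kakeyaLine (x i) (y' i)))
          have hneg : Finset.univ.filter (fun y' : Fin (m + 1) → (Fin n → F) =>
              ¬ z ∈ s.biUnion (fun i => kakeyaLine (x i) (y' i)))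
              = Finset.univ.filter (fun y' : Fin (m + 1) → (Fin n → F) =>
                  ∀ i ∈ s, z ∉ kakeyaLine (x i) (y' i)) := by
            apply Finset.filter_congr
            intro y' _
            simp [Finset.mem_biUnion]
          rw [hneg, hcount z, Finset.card_univ, hcard_univ_fun] at hsplit
          exact Nat.eq_sub_of_add_eq hsplit
      _ = N * (N ^ (m + 1) - (N - q) ^ m * N) := by
          rw [Finset.sum_const, Finset.card_univ, hcV, smul_eq_mul]
  -- averaging
  set c : ℝ := (N : ℝ) * ((N : ℝ) ^ (m + 1) - ((N : ℝ) - q) ^ m * N) / (N : ℝ) ^ (m + 1)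
    with hcdef
  have hNr0 : (0 : ℝ) < (N : ℝ) := by exact_mod_cast hN0
  have havg : ∃ y : Fin (m + 1) → (Fin n → F),
      ((s.biUnion (fun i => kakeyaLine (x i) (y i))).card : ℝ) ≤ c := by
    have hsum : ∑ y' : Fin (m + 1) → (Fin n → F),
        ((s.biUnion (fun i => kakeyaLine (x i) (y' i))).card : ℝ)
        ≤ ∑ _y' : Fin (m + 1) → (Fin n → F), c := by
      have hl : ∑ y' : Fin (m + 1) → (Fin n → F),
          ((s.biUnion (fun i => kakeyaLine (x i) (y' i))).card : ℝ)
          = (N : ℝ) * ((N : ℝ) ^ (m + 1) - ((N : ℝ) - q) ^ m * N) := by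
        rw [← Nat.cast_sum, hT]
        push_cast [Nat.cast_sub hsub, Nat.cast_sub hqN]
        ring
      have hr : ∑ _y' : Fin (m + 1) → (Fin n → F), c
          = (N : ℝ) * ((N : ℝ) ^ (m + 1) - ((N : ℝ) - q) ^ m * N) := by
        rw [Finset.sum_const, Finset.card_univ, hcard_univ_fun, nsmul_eq_mul, hcdef]
        push_cast
        field_simp
      rw [hl, hr]
    obtain ⟨y, _, hy⟩ := Finset.exists_le_of_sum_le Finset.univ_nonempty hsum
    exact ⟨y, hy⟩
  obtain ⟨y, hy⟩ := havg
  refine ⟨y, ?_⟩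
  -- split off the line with index i0
  have hsplit : (Finset.univ.biUnion (fun i => kakeyaLine (x i) (y i))).card
      ≤ q + (s.biUnion (fun i => kakeyaLine (x i) (y i))).card := by
    have h1 : Finset.univ.biUnion (fun i => kakeyaLine (x i) (y i))
        ⊆ kakeyaLine (x i0) (y i0) ∪ s.biUnion (fun i => kakeyaLine (x i) (y i)) := by
      intro z hz
      rw [Finset.mem_biUnion] at hz
      obtain ⟨i, _, hi⟩ := hz
      rcases eq_or_ne i i0 with rfl | hne'
      · exact Finset.mem_union_left _ hi
      · exact Finset.mem_union_right _ (Finset.mem_biUnion.mpr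
          ⟨i, Finset.mem_erase.mpr ⟨hne', Finset.mem_univ _⟩, hi⟩)
    have h2 : (kakeyaLine (x i0) (y i0)).card ≤ q := by
      refine le_trans (Finset.card_image_le) ?_
      rw [Finset.card_univ, hq]
    calc (Finset.univ.biUnion (fun i => kakeyaLine (x i) (y i))).card
        ≤ (kakeyaLine (x i0) (y i0) ∪ s.biUnion (fun i => kakeyaLine (x i) (y i))).card :=
          Finset.card_le_card h1
      _ ≤ (kakeyaLine (x i0) (y i0)).card + (s.biUnion (fun i => kakeyaLine (x i) (y i))).card :=
          Finset.card_union_le _ _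
      _ ≤ q + (s.biUnion (fun i => kakeyaLine (x i) (y i))).card := Nat.add_le_add_right h2 _
  -- identify c with the stated bound
  have hQ0 : (0 : ℝ) < (q : ℝ) := by exact_mod_cast hq0
  have hn1 : n = (n - 1) + 1 := (Nat.succ_pred_eq_of_pos (Nat.lt_of_lt_of_le Nat.zero_lt_two hn)).symm
  have hkey : (1 : ℝ) - 1 / (q : ℝ) ^ (n - 1) = ((q : ℝ) ^ n - q) / (q : ℝ) ^ n := by
    rw [hn1, pow_succ]
    have h1 : ((q : ℝ) ^ (n - 1)) ≠ 0 := by positivity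
    have h2 : ((q : ℝ)) ≠ 0 := ne_of_gt hQ0
    field_simp
    simp only [Nat.add_sub_cancel, Nat.add_sub_cancel_left]
    ring
  have hceq : c = (q : ℝ) ^ n * (1 - (1 - 1 / (q : ℝ) ^ (n - 1)) ^ m) := by
    rw [hkey, div_pow, hcdef, hNdef]
    have hA : ((q : ℝ) ^ n) ≠ 0 := by positivity
    have hAm : ((q : ℝ) ^ n) ^ (m + 1) = ((q : ℝ) ^ n) ^ m * (q : ℝ) ^ n := pow_succ _ _
    push_cast
    rw [hAm]
    field_simp
  calc ((Finset.univ.biUnion (fun i => kakeyaLine (x i) (y i))).card : ℝ)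
      ≤ (q : ℝ) + ((s.biUnion (fun i => kakeyaLine (x i) (y i))).card : ℝ) := by
        exact_mod_cast hsplit
    _ ≤ (q : ℝ) + c := by linarith
    _ = (q : ℝ) + (q : ℝ) ^ n * (1 - (1 - 1 / (q : ℝ) ^ (n - 1)) ^ m) := by rw [hceq]
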